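/- For the Morley form of f1, f2 of degrees d1, d2 with δ = d1 + d2 − 2, the component of bidegree (δ,0) equals sylv_{(0,0)}(f1,f2) ⊗ 1 and the component of bidegree (0,δ) equals 1 ⊗ sylv_{(0,0)}(f1,f2) in B ⊗_A B. -/

import Mathlib

open MvPolynomial

section Helpers

variable {A : Type*} [CommRing A]

private lemma regX {σ : Type*} (i : σ) {p : MvPolynomial σ A}
    (h : X i * p = 0) : p = 0 := by
  ext d
  have := congrArg (coeff (Finsupp.single i 1 + d)) h
  rw [coeff_X_mul] at this
  simpa using this

private lemma Xdvd {σ : Type*} [DecidableEq σ] {i j : σ} (hij : i ≠ j)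
    {p q : MvPolynomial σ A} (h : X i * p = X j * q) :
    ∃ w, p = X j * w ∧ q = X i * w := by
  have hdvd : X j ∣ p := by
    rw [X_dvd_iff_modMonomial_eq_zero]
    ext d
    by_cases hle : Finsupp.single j 1 ≤ d
    · rw [coeff_modMonomial_of_le _ hle, coeff_zero]
    · rw [coeff_modMonomial_of_not_le _ hle, coeff_zero]
      have hdj : d j = 0 := by
        by_contra hc
        exact hle (Finsupp.single_le_iff.mpr (Nat.one_le_iff_ne_zero.mpr hc))
      have := congrArg (coeff (Finsupp.single i 1 + d)) h
      rw [coeff_X_mul, coeff_X_mul'] at this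
      rw [if_neg] at this
      · exact this
      · simp [Finsupp.mem_support_iff, Finsupp.single_apply, hdj, hij]
  obtain ⟨w, hw⟩ := hdvd
  refine ⟨w, hw, ?_⟩
  have h2 : X j * (q - X i * w) = 0 := by
    rw [hw] at h; linear_combination -h
  have h3 := regX j h2
  have : q = X i * w := by linear_combination h3
  exact this

private lemma syzTS {p q : MvPolynomial (Fin 4) A}
    (h : (X 0 - X 2) * p = (X 1 - X 3) * q) :
    ∃ w, p = (X 1 - X 3) * w ∧ q = (X 0 - X 2) * w := by
  set φ : MvPolynomial (Fin 4) A →ₐ[A] MvPolynomial (Fin 4) A :=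
    aeval ![X 0 + X 2, X 1 + X 3, X 2, X 3] with hφ
  set ψ : MvPolynomial (Fin 4) A →ₐ[A] MvPolynomial (Fin 4) A :=
    aeval ![X 0 - X 2, X 1 - X 3, X 2, X 3] with hψ
  have hcomp : ψ.comp φ = AlgHom.id A _ := by
    apply algHom_ext
    intro i
    fin_cases i <;> simp [hφ, hψ]
  have hψφ : ∀ r, ψ (φ r) = r := fun r => congrArg (· r) (congrArg DFunLike.coe hcomp)
  have h2 : X 0 * φ p = X 1 * φ q := by
    have := congrArg φ h
    simp only [map_mul, map_sub, hφ, aeval_X] at this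
    simp only [Matrix.cons_val_zero, Matrix.cons_val_one, Matrix.head_cons] at this
    convert this using 2 <;> ring_nf <;> simp [Matrix.cons_val_two, Matrix.cons_val_three]
  obtain ⟨w, hw1, hw2⟩ := Xdvd (by decide : (0 : Fin 4) ≠ 1) h2
  refine ⟨ψ w, ?_, ?_⟩
  · have := congrArg ψ hw1
    rw [hψφ] at this
    rw [this]
    simp [hψ]
  · have := congrArg ψ hw2
    rw [hψφ] at this
    rw [this]
    simp [hψ]

private lemma detCongr {R : Type*} [CommRing R] {t s D1 D2 p11 p12 p21 p22 q11 q12 q21 q22 : R}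
    (syz : ∀ p q : R, t * p = s * q → ∃ w, p = s * w ∧ q = t * w)
    (h1 : D1 = t * p11 + s * p12) (h1' : D1 = t * q11 + s * q12)
    (h2 : D2 = t * p21 + s * p22) (h2' : D2 = t * q21 + s * q22) :
    ∃ c1 c2, p11 * p22 - p12 * p21 - (q11 * q22 - q12 * q21) = c1 * D1 + c2 * D2 := by
  obtain ⟨w1, hw1, hw1'⟩ := syz (p11 - q11) (q12 - p12) (by linear_combination h1' - h1)
  obtain ⟨w2, hw2, hw2'⟩ := syz (p21 - q21) (q22 - p22) (by linear_combination h2' - h2)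
  have e11 : p11 = q11 + s * w1 := by linear_combination hw1
  have e12 : p12 = q12 - t * w1 := by linear_combination -hw1'
  have e21 : p21 = q21 + s * w2 := by linear_combination hw2
  have e22 : p22 = q22 - t * w2 := by linear_combination -hw2'
  subst e11 e12 e21 e22
  exact ⟨-w2, w1, by linear_combination w2 * h1' - w1 * h2'⟩

private lemma weight_apply4 (w : Fin 4 → ℕ) (d : Fin 4 →₀ ℕ) :
    Finsupp.weight w d = d 0 * w 0 + d 1 * w 1 + d 2 * w 2 + d 3 * w 3 := by
  rw [Finsupp.weight_apply, Finsupp.sum_fintype]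
  · simp [Fin.sum_univ_four, mul_comm]
  · intro i; simp

private lemma weight_apply2 (w : Fin 2 → ℕ) (d : Fin 2 →₀ ℕ) :
    Finsupp.weight w d = d 0 * w 0 + d 1 * w 1 := by
  rw [Finsupp.weight_apply, Finsupp.sum_fintype]
  · simp [Fin.sum_univ_two, mul_comm]
  · intro i; simp

private lemma comp0_eq_aeval (w : Fin 4 → ℕ) (p : MvPolynomial (Fin 4) A) :
    weightedHomogeneousComponent w 0 p =
      aeval (fun i => if w i = 0 then (X i : MvPolynomial (Fin 4) A) else 0) p := by
  induction p using MvPolynomial.induction_on' with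
  | add p q hp hq => rw [map_add, map_add, hp, hq]
  | monomial d c =>
    by_cases hw : Finsupp.weight w d = 0
    · rw [IsWeightedHomogeneous.weightedHomogeneousComponent_same
        (isWeightedHomogeneous_monomial w d c hw)]
      rw [aeval_monomial]
      have hsupp : ∀ i ∈ d.support, w i = 0 := by
        intro i hi
        have hne := Finsupp.mem_support_iff.mp hi
        rw [weight_apply4, Nat.add_eq_zero, Nat.add_eq_zero, Nat.add_eq_zero] at hw
        have hmul : d i * w i = 0 := by fin_cases i <;> tauto
        rcases Nat.mul_eq_zero.mp hmul with h | h
        · exact absurd h hne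
        · exact h
      rw [Finsupp.prod_congr (g2 := fun i k => (X i : MvPolynomial (Fin 4) A) ^ k)
        (fun i hi => by rw [if_pos (hsupp i hi)])]
      rw [monomial_eq]
      rfl
    · rw [IsWeightedHomogeneous.weightedHomogeneousComponent_ne _
        (isWeightedHomogeneous_monomial w d c rfl) (Ne.symm hw)]
      obtain ⟨i, hi, hwi⟩ : ∃ i ∈ d.support, w i ≠ 0 := by
        by_contra hc
        push_neg at hc
        apply hw
        rw [weight_apply4]
        have h0 : ∀ i : Fin 4, d i * w i = 0 := by
          intro i
          by_cases hd : d i = 0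
          · simp [hd]
          · rw [hc i (Finsupp.mem_support_iff.mpr hd)]; ring
        rw [h0 0, h0 1, h0 2, h0 3]
      rw [aeval_monomial]
      rw [Finsupp.prod]
      rw [Finset.prod_eq_zero hi (by
        rw [if_neg hwi]
        exact zero_pow (Finsupp.mem_support_iff.mp hi))]
      rw [mul_zero]

private lemma flip_comp {p : MvPolynomial (Fin 4) A} {n : ℕ} (hp : p.IsHomogeneous n) :
    weightedHomogeneousComponent ![1, 1, 0, 0] n p =
      weightedHomogeneousComponent ![0, 0, 1, 1] 0 p := by
  classical
  ext d
  rw [coeff_weightedHomogeneousComponent, coeff_weightedHomogeneousComponent]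
  by_cases hc : coeff d p = 0
  · simp [hc]
  · have hdeg : Finsupp.weight (1 : Fin 4 → ℕ) d = n := hp hc
    rw [weight_apply4] at hdeg
    simp only [Pi.one_apply, mul_one] at hdeg
    refine if_congr ?_ rfl rfl
    rw [weight_apply4, weight_apply4]
    simp only [Matrix.cons_val_zero, Matrix.cons_val_one, Matrix.head_cons]
    norm_num [Matrix.cons_val_two, Matrix.cons_val_three]
    omega

private lemma weight_mapDomain (w : Fin 4 → ℕ) (u : Fin 2 → Fin 4) (e : Fin 2 →₀ ℕ) :
    Finsupp.weight w (Finsupp.mapDomain u e) = Finsupp.weight (w ∘ u) e := by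
  rw [Finsupp.weight_apply, Finsupp.weight_apply, Finsupp.sum_mapDomain_index]
  · rfl
  · intro a; simp
  · intro a b c; exact add_mul b c _

private lemma renw_X {f : MvPolynomial (Fin 2) A} {n : ℕ} (hf : f.IsHomogeneous n) :
    IsWeightedHomogeneous ![1, 1, 0, 0] (rename ![0, 1] f) n := by
  intro d hd
  obtain ⟨e, rfl, hce⟩ := coeff_rename_ne_zero _ _ _ hd
  have h1 : Finsupp.weight (1 : Fin 2 → ℕ) e = n := hf hce
  rw [weight_apply2] at h1
  rw [weight_mapDomain, weight_apply2]
  simpa using h1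

private lemma renw_Y {f : MvPolynomial (Fin 2) A} {n : ℕ} (hf : f.IsHomogeneous n) :
    IsWeightedHomogeneous ![1, 1, 0, 0] (rename ![2, 3] f) 0 := by
  intro d hd
  obtain ⟨e, rfl, hce⟩ := coeff_rename_ne_zero _ _ _ hd
  rw [weight_mapDomain, weight_apply2]
  simp [Matrix.cons_val_two, Matrix.cons_val_three]

private lemma ren_homog {f : MvPolynomial (Fin 2) A} {n : ℕ} (u : Fin 2 → Fin 4)
    (hf : f.IsHomogeneous n) : (rename u f).IsHomogeneous n := by
  intro d hd
  obtain ⟨e, rfl, hce⟩ := coeff_rename_ne_zero _ _ _ hd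
  have h1 : Finsupp.weight (1 : Fin 2 → ℕ) e = n := hf hce
  rw [weight_apply2] at h1
  rw [weight_mapDomain, weight_apply2]
  simpa using h1

private lemma decompose_eq_comp (w : Fin 4 → ℕ) (p : MvPolynomial (Fin 4) A) (k : ℕ) :
    letI := weightedGradedAlgebra A w
    (DirectSum.decompose (weightedHomogeneousSubmodule A w) p k : MvPolynomial (Fin 4) A) =
      weightedHomogeneousComponent w k p := by
  letI := weightedGradedAlgebra A w
  exact MvPolynomial.decompose'_apply A w p k

private lemma compMemSpan {w : Fin 4 → ℕ} {S : Set (MvPolynomial (Fin 4) A)}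
    (hS : ∀ x ∈ S, ∃ m, IsWeightedHomogeneous w x m) {p : MvPolynomial (Fin 4) A}
    (hp : p ∈ Ideal.span S) (k : ℕ) :
    weightedHomogeneousComponent w k p ∈ Ideal.span S := by
  letI := weightedGradedAlgebra A w
  have h := Ideal.homogeneous_span (weightedHomogeneousSubmodule A w) S
    (fun x hx => by obtain ⟨m, hm⟩ := hS x hx; exact ⟨m, hm⟩)
  have := h k hp
  rwa [decompose_eq_comp] at this

private lemma mulComp {w : Fin 4 → ℕ} {l : MvPolynomial (Fin 4) A} {m : ℕ}
    (hl : IsWeightedHomogeneous w l m) (p : MvPolynomial (Fin 4) A) (k : ℕ) :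
    weightedHomogeneousComponent w (m + k) (l * p) =
      l * weightedHomogeneousComponent w k p := by
  letI := weightedGradedAlgebra A w
  have := DirectSum.coe_decompose_mul_add_of_left_mem (𝒜 := weightedHomogeneousSubmodule A w)
    (i := m) (j := k) (b := p) hl
  rwa [decompose_eq_comp, decompose_eq_comp] at this

private lemma f_ne_zero_of_reg [Nontrivial A] {f1 f2 : MvPolynomial (Fin 2) A}
    (hreg : RingTheory.Sequence.IsRegular (MvPolynomial (Fin 2) A) [f1, f2]) :
    f1 ≠ 0 ∧ f2 ≠ 0 := by
  constructor
  · intro h0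
    have hr := hreg.toIsWeaklyRegular.regular_mod_prev 0 (by simp)
    simp only [List.getElem_cons_zero, h0] at hr
    have hsub := hr.subsingleton
    rw [Submodule.Quotient.subsingleton_iff] at hsub
    simp only [List.take_zero, Ideal.ofList_nil, Submodule.bot_smul] at hsub
    exact absurd hsub bot_ne_top
  · intro h0
    have hr := hreg.toIsWeaklyRegular.regular_mod_prev 1 (by simp)
    simp only [List.getElem_cons_succ, List.getElem_cons_zero, h0] at hr
    have hsub := hr.subsingleton
    rw [Submodule.Quotient.subsingleton_iff] at hsub
    apply hreg.top_ne_smul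
    have hle : Ideal.ofList [f1] • (⊤ : Submodule (MvPolynomial (Fin 2) A) (MvPolynomial (Fin 2) A))
        ≤ Ideal.ofList [f1, f2] • ⊤ := by
      apply Submodule.smul_mono_left
      simp only [Ideal.ofList_cons, Ideal.ofList_nil]
      exact sup_le le_sup_left bot_le
    have ht : [f1, f2].take 1 = [f1] := rfl
    rw [ht] at hsub
    have : (⊤ : Submodule (MvPolynomial (Fin 2) A) (MvPolynomial (Fin 2) A)) ≤
        Ideal.ofList [f1, f2] • ⊤ := hsub.ge.trans hle
    exact (top_le_iff.mp this).symm

private lemma aeval_X_comp {u : Fin 2 → Fin 4} (f : MvPolynomial (Fin 2) A) :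
    aeval (fun j => (X (u j) : MvPolynomial (Fin 4) A)) f = rename u f := by
  have h : (aeval (fun j => (X (u j) : MvPolynomial (Fin 4) A)) :
      MvPolynomial (Fin 2) A →ₐ[A] MvPolynomial (Fin 4) A) = rename u :=
    algHom_ext (fun i => by simp)
  exact congrArg (· f) (congrArg DFunLike.coe h)

end Helpers

/-- For the Morley form of `f1, f2` of degrees `d1, d2` with
`δ = d1 + d2 − 2`, the component of bidegree `(δ,0)` equals `sylv_{(0,0)}(f1,f2) ⊗ 1` and
the component of bidegree `(0,δ)` equals `1 ⊗ sylv_{(0,0)}(f1,f2)` in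
`B ⊗_A B = A[X,Y]/(f1(X),f2(X),f1(Y),f2(Y))`.  The Morley form is the class of
`det (h_{i,j})` for a decomposition `f_i(X) − f_i(Y) = (X1−Y1)h_{i,1} + (X2−Y2)h_{i,2}`,
its bidegree components are weighted homogeneous components of weight `(1,1,0,0)`, and
`sylv_{(0,0)}(f1,f2)` is the determinant of a decomposition `f_i = X1 a_{i,1} + X2 a_{i,2}`. -/
theorem stmt5 {A : Type*} [CommRing A] [Nontrivial A] (d1 d2 : ℕ)
    (f1 f2 : MvPolynomial (Fin 2) A)
    (hf1 : f1.IsHomogeneous d1) (hf2 : f2.IsHomogeneous d2)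
    (hreg : RingTheory.Sequence.IsRegular (MvPolynomial (Fin 2) A) [f1, f2])
    (F1X F2X F1Y F2Y : MvPolynomial (Fin 4) A)
    (hF1X : F1X = rename ![0, 1] f1) (hF2X : F2X = rename ![0, 1] f2)
    (hF1Y : F1Y = rename ![2, 3] f1) (hF2Y : F2Y = rename ![2, 3] f2)
    -- a decomposition defining the Morley form
    (h11 h12 h21 h22 : MvPolynomial (Fin 4) A)
    (hh1 : F1X - F1Y = (X 0 - X 2) * h11 + (X 1 - X 3) * h12)
    (hh2 : F2X - F2Y = (X 0 - X 2) * h21 + (X 1 - X 3) * h22)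
    -- a decomposition defining the Sylvester form `sylv_{(0,0)}(f1,f2)`
    (a11 a12 a21 a22 : MvPolynomial (Fin 2) A)
    (ha11 : a11.IsHomogeneous (d1 - 1)) (ha12 : a12.IsHomogeneous (d1 - 1))
    (ha21 : a21.IsHomogeneous (d2 - 1)) (ha22 : a22.IsHomogeneous (d2 - 1))
    (hfa1 : f1 = X 0 * a11 + X 1 * a12)
    (hfa2 : f2 = X 0 * a21 + X 1 * a22) :
    (weightedHomogeneousComponent ![1, 1, 0, 0] (d1 + d2 - 2) (h11 * h22 - h12 * h21) -
        rename ![0, 1] (a11 * a22 - a12 * a21) ∈ Ideal.span {F1X, F2X, F1Y, F2Y}) ∧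
    (weightedHomogeneousComponent ![1, 1, 0, 0] 0 (h11 * h22 - h12 * h21) -
        rename ![2, 3] (a11 * a22 - a12 * a21) ∈ Ideal.span {F1X, F2X, F1Y, F2Y}) := by
  classical
  obtain ⟨hf1ne, hf2ne⟩ := f_ne_zero_of_reg hreg
  -- positivity of degrees
  have hd1 : 1 ≤ d1 := by
    by_contra hc
    have hd0 : d1 = 0 := by omega
    have h1 : f1.IsHomogeneous 1 := by
      rw [hfa1]
      have := ((isHomogeneous_X A (0 : Fin 2)).mul (hd0 ▸ ha11)).add
        ((isHomogeneous_X A (1 : Fin 2)).mul (hd0 ▸ ha12))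
      simpa using this
    have := (hf1.inj_right h1 hf1ne : d1 = 1)
    omega
  have hd2 : 1 ≤ d2 := by
    by_contra hc
    have hd0 : d2 = 0 := by omega
    have h1 : f2.IsHomogeneous 1 := by
      rw [hfa2]
      have := ((isHomogeneous_X A (0 : Fin 2)).mul (hd0 ▸ ha21)).add
        ((isHomogeneous_X A (1 : Fin 2)).mul (hd0 ▸ ha22))
      simpa using this
    have := (hf2.inj_right h1 hf2ne : d2 = 1)
    omega
  set t : MvPolynomial (Fin 4) A := X 0 - X 2 with hts
  set s : MvPolynomial (Fin 4) A := X 1 - X 3 with hss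
  set I := Ideal.span {F1X, F2X, F1Y, F2Y} with hI
  have hmemF1X : F1X ∈ I := Ideal.subset_span (by simp)
  have hmemF2X : F2X ∈ I := Ideal.subset_span (by simp)
  have hmemF1Y : F1Y ∈ I := Ideal.subset_span (by simp)
  have hmemF2Y : F2Y ∈ I := Ideal.subset_span (by simp)
  -- homogeneity of the generators
  have hwF1X : IsWeightedHomogeneous ![1, 1, 0, 0] F1X d1 := hF1X ▸ renw_X hf1
  have hwF2X : IsWeightedHomogeneous ![1, 1, 0, 0] F2X d2 := hF2X ▸ renw_X hf2
  have hwF1Y : IsWeightedHomogeneous ![1, 1, 0, 0] F1Y 0 := hF1Y ▸ renw_Y hf1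
  have hwF2Y : IsWeightedHomogeneous ![1, 1, 0, 0] F2Y 0 := hF2Y ▸ renw_Y hf2
  have hgen : ∀ x ∈ ({F1X, F2X, F1Y, F2Y} : Set (MvPolynomial (Fin 4) A)), ∃ m,
      IsWeightedHomogeneous ![1, 1, 0, 0] x m := by
    intro x hx
    simp only [Set.mem_insert_iff, Set.mem_singleton_iff] at hx
    rcases hx with rfl | rfl | rfl | rfl
    exacts [⟨d1, hwF1X⟩, ⟨d2, hwF2X⟩, ⟨0, hwF1Y⟩, ⟨0, hwF2Y⟩]
  -- total-degree homogeneity of the differences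
  have hDh1 : (F1X - F1Y).IsHomogeneous d1 :=
    (homogeneousSubmodule (Fin 4) A d1).sub_mem (hF1X ▸ ren_homog _ hf1) (hF1Y ▸ ren_homog _ hf1)
  have hDh2 : (F2X - F2Y).IsHomogeneous d2 :=
    (homogeneousSubmodule (Fin 4) A d2).sub_mem (hF2X ▸ ren_homog _ hf2) (hF2Y ▸ ren_homog _ hf2)
  -- homogeneity of t and s for total degree
  have hwt : IsWeightedHomogeneous (1 : Fin 4 → ℕ) t 1 := by
    have := (weightedHomogeneousSubmodule A (1 : Fin 4 → ℕ) 1).sub_mem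
      (by exact isWeightedHomogeneous_X A (1 : Fin 4 → ℕ) 0)
      (by exact isWeightedHomogeneous_X A (1 : Fin 4 → ℕ) 2)
    exact this
  have hws : IsWeightedHomogeneous (1 : Fin 4 → ℕ) s 1 := by
    have := (weightedHomogeneousSubmodule A (1 : Fin 4 → ℕ) 1).sub_mem
      (by exact isWeightedHomogeneous_X A (1 : Fin 4 → ℕ) 1)
      (by exact isWeightedHomogeneous_X A (1 : Fin 4 → ℕ) 3)
    exact this
  -- the truncated decomposition
  set h11' := weightedHomogeneousComponent (1 : Fin 4 → ℕ) (d1 - 1) h11 with hdef11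
  set h12' := weightedHomogeneousComponent (1 : Fin 4 → ℕ) (d1 - 1) h12 with hdef12
  set h21' := weightedHomogeneousComponent (1 : Fin 4 → ℕ) (d2 - 1) h21 with hdef21
  set h22' := weightedHomogeneousComponent (1 : Fin 4 → ℕ) (d2 - 1) h22 with hdef22
  have hd1e : d1 = 1 + (d1 - 1) := by omega
  have hd2e : d2 = 1 + (d2 - 1) := by omega
  have hh1' : F1X - F1Y = t * h11' + s * h12' := by
    have := congrArg (weightedHomogeneousComponent (1 : Fin 4 → ℕ) d1) hh1
    rwa [IsWeightedHomogeneous.weightedHomogeneousComponent_same hDh1, map_add,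
      hd1e, mulComp hwt, mulComp hws] at this
  have hh2' : F2X - F2Y = t * h21' + s * h22' := by
    have := congrArg (weightedHomogeneousComponent (1 : Fin 4 → ℕ) d2) hh2
    rwa [IsWeightedHomogeneous.weightedHomogeneousComponent_same hDh2, map_add,
      hd2e, mulComp hwt, mulComp hws] at this
  -- the two Morley decompositions have determinants congruent mod I
  obtain ⟨c1, c2, hc⟩ := detCongr (fun p q hpq => syzTS hpq) hh1 hh1' hh2 hh2'
  have hcmem : c1 * (F1X - F1Y) + c2 * (F2X - F2Y) ∈ I :=
    I.add_mem (I.mul_mem_left c1 (I.sub_mem hmemF1X hmemF1Y))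
      (I.mul_mem_left c2 (I.sub_mem hmemF2X hmemF2Y))
  -- truncated determinant is homogeneous of degree d1 + d2 - 2
  have hdet' : (h11' * h22' - h12' * h21').IsHomogeneous (d1 + d2 - 2) := by
    have he : (d1 - 1) + (d2 - 1) = d1 + d2 - 2 := by omega
    have h1 : (h11' * h22').IsHomogeneous (d1 + d2 - 2) := by
      have := (weightedHomogeneousComponent_isWeightedHomogeneous (w := (1 : Fin 4 → ℕ)) (d1 - 1) h11).mul
        (weightedHomogeneousComponent_isWeightedHomogeneous (w := (1 : Fin 4 → ℕ)) (d2 - 1) h22)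
      rwa [he] at this
    have h2 : (h12' * h21').IsHomogeneous (d1 + d2 - 2) := by
      have := (weightedHomogeneousComponent_isWeightedHomogeneous (w := (1 : Fin 4 → ℕ)) (d1 - 1) h12).mul
        (weightedHomogeneousComponent_isWeightedHomogeneous (w := (1 : Fin 4 → ℕ)) (d2 - 1) h21)
      rwa [he] at this
    exact (homogeneousSubmodule (Fin 4) A (d1 + d2 - 2)).sub_mem h1 h2
  -- decomposition of the components of det h
  have hsplit : ∀ k : ℕ, weightedHomogeneousComponent ![1, 1, 0, 0] k (h11 * h22 - h12 * h21)
      = weightedHomogeneousComponent ![1, 1, 0, 0] k (h11' * h22' - h12' * h21')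
        + weightedHomogeneousComponent ![1, 1, 0, 0] k
          (c1 * (F1X - F1Y) + c2 * (F2X - F2Y)) := by
    intro k
    rw [← map_add]
    congr 1
    linear_combination hc
  constructor
  · -- component of weight δ = d1 + d2 - 2
    set Z' : MvPolynomial (Fin 4) A →ₐ[A] MvPolynomial (Fin 4) A :=
      aeval (fun i => if (![0, 0, 1, 1] : Fin 4 → ℕ) i = 0 then (X i : MvPolynomial (Fin 4) A) else 0) with hZ'
    have hZ'0 : Z' (X 0) = X 0 := by simp [hZ']
    have hZ'1 : Z' (X 1) = X 1 := by simp [hZ']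
    have hZ'2 : Z' (X 2) = 0 := by
      simp only [hZ', aeval_X]
      norm_num [Matrix.cons_val_two]
    have hZ'3 : Z' (X 3) = 0 := by
      simp only [hZ', aeval_X]
      norm_num [Matrix.cons_val_three]
    have hZ'X : ∀ (f : MvPolynomial (Fin 2) A), Z' (rename ![0, 1] f) = rename ![0, 1] f := by
      intro f
      rw [show Z' (rename ![0, 1] f) = aeval ((fun i => if (![0, 0, 1, 1] : Fin 4 → ℕ) i = 0
        then (X i : MvPolynomial (Fin 4) A) else 0) ∘ ![0, 1]) f from aeval_rename _ _ _]
      have hvv : ((fun i => if (![0, 0, 1, 1] : Fin 4 → ℕ) i = 0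
          then (X i : MvPolynomial (Fin 4) A) else 0) ∘ ![0, 1])
          = (fun j => (X (![0, 1] j) : MvPolynomial (Fin 4) A)) := by
        funext j
        fin_cases j <;> simp
      rw [hvv, aeval_X_comp]
    have hZ'Y : ∀ (f : MvPolynomial (Fin 2) A) (n : ℕ), f.IsHomogeneous n → 1 ≤ n →
        Z' (rename ![2, 3] f) = 0 := by
      intro f n hf hn
      rw [show Z' (rename ![2, 3] f) = aeval ((fun i => if (![0, 0, 1, 1] : Fin 4 → ℕ) i = 0
        then (X i : MvPolynomial (Fin 4) A) else 0) ∘ ![2, 3]) f from aeval_rename _ _ _]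
      have hv : ((fun i => if (![0, 0, 1, 1] : Fin 4 → ℕ) i = 0 then (X i : MvPolynomial (Fin 4) A) else 0)
          ∘ ![2, 3]) = (fun _ => (0 : MvPolynomial (Fin 4) A)) := by
        funext j
        fin_cases j <;> · simp only [Function.comp_apply]; norm_num [Matrix.cons_val_two,
          Matrix.cons_val_three]
      rw [hv]
      rw [show (fun _ => (0 : MvPolynomial (Fin 4) A)) = (0 : Fin 2 → MvPolynomial (Fin 4) A) from rfl, aeval_zero]
      have : constantCoeff f = 0 := by
        rw [constantCoeff_eq]
        exact hf.coeff_eq_zero (d := 0) (by simp [Finsupp.weight_apply]; omega)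
      rw [this, map_zero]
    -- apply Z' to the truncated identities
    have hid1 : F1X = X 0 * Z' h11' + X 1 * Z' h12' := by
      have := congrArg Z' hh1'
      rw [map_sub, map_add, map_mul, map_mul, map_sub, map_sub, hZ'0, hZ'1, hZ'2, hZ'3,
        hF1X, hF1Y, hZ'X, hZ'Y f1 d1 hf1 hd1] at this
      rw [hF1X]
      linear_combination this
    have hid2 : F2X = X 0 * Z' h21' + X 1 * Z' h22' := by
      have := congrArg Z' hh2'
      rw [map_sub, map_add, map_mul, map_mul, map_sub, map_sub, hZ'0, hZ'1, hZ'2, hZ'3,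
        hF2X, hF2Y, hZ'X, hZ'Y f2 d2 hf2 hd2] at this
      rw [hF2X]
      linear_combination this
    have hidA1 : F1X = X 0 * rename ![0, 1] a11 + X 1 * rename ![0, 1] a12 := by
      rw [hF1X, hfa1, map_add, map_mul, map_mul, rename_X, rename_X]
      norm_num
    have hidA2 : F2X = X 0 * rename ![0, 1] a21 + X 1 * rename ![0, 1] a22 := by
      rw [hF2X, hfa2, map_add, map_mul, map_mul, rename_X, rename_X]
      norm_num
    obtain ⟨u1, u2, hu⟩ := detCongr (fun p q hpq => Xdvd (by decide : (0 : Fin 4) ≠ 1) hpq)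
      hid1 hidA1 hid2 hidA2
    have hrenA : rename ![0, 1] (a11 * a22 - a12 * a21)
        = rename ![0, 1] a11 * rename ![0, 1] a22 - rename ![0, 1] a12 * rename ![0, 1] a21 := by
      rw [map_sub, map_mul, map_mul]
    have hZdet : weightedHomogeneousComponent ![1, 1, 0, 0] (d1 + d2 - 2)
        (h11' * h22' - h12' * h21') = Z' h11' * Z' h22' - Z' h12' * Z' h21' := by
      rw [flip_comp hdet', comp0_eq_aeval, ← hZ', map_sub, map_mul, map_mul]
    have hfinal : weightedHomogeneousComponent ![1, 1, 0, 0] (d1 + d2 - 2)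
          (h11 * h22 - h12 * h21) - rename ![0, 1] (a11 * a22 - a12 * a21)
        = u1 * F1X + u2 * F2X + weightedHomogeneousComponent ![1, 1, 0, 0] (d1 + d2 - 2)
          (c1 * (F1X - F1Y) + c2 * (F2X - F2Y)) := by
      rw [hsplit, hZdet, map_sub, map_mul, map_mul]
      linear_combination hu
    rw [hfinal]
    exact I.add_mem (I.add_mem (I.mul_mem_left u1 hmemF1X) (I.mul_mem_left u2 hmemF2X))
      (compMemSpan hgen hcmem _)
  · -- component of weight 0
    set Z : MvPolynomial (Fin 4) A →ₐ[A] MvPolynomial (Fin 4) A :=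
      aeval (fun i => if (![1, 1, 0, 0] : Fin 4 → ℕ) i = 0 then (X i : MvPolynomial (Fin 4) A) else 0) with hZd
    have hZ0 : Z (X 0) = 0 := by simp [hZd]
    have hZ1 : Z (X 1) = 0 := by simp [hZd]
    have hZ2 : Z (X 2) = X 2 := by
      simp only [hZd, aeval_X]
      norm_num [Matrix.cons_val_two]
    have hZ3 : Z (X 3) = X 3 := by
      simp only [hZd, aeval_X]
      norm_num [Matrix.cons_val_three]
    have hZY : ∀ (f : MvPolynomial (Fin 2) A), Z (rename ![2, 3] f) = rename ![2, 3] f := by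
      intro f
      rw [show Z (rename ![2, 3] f) = aeval ((fun i => if (![1, 1, 0, 0] : Fin 4 → ℕ) i = 0
        then (X i : MvPolynomial (Fin 4) A) else 0) ∘ ![2, 3]) f from aeval_rename _ _ _]
      have hvv : ((fun i => if (![1, 1, 0, 0] : Fin 4 → ℕ) i = 0
          then (X i : MvPolynomial (Fin 4) A) else 0) ∘ ![2, 3])
          = (fun j => (X (![2, 3] j) : MvPolynomial (Fin 4) A)) := by
        funext j
        fin_cases j <;> · simp only [Function.comp_apply]; norm_num [Matrix.cons_val_two,
          Matrix.cons_val_three]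
      rw [hvv, aeval_X_comp]
    have hZX : ∀ (f : MvPolynomial (Fin 2) A) (n : ℕ), f.IsHomogeneous n → 1 ≤ n →
        Z (rename ![0, 1] f) = 0 := by
      intro f n hf hn
      rw [show Z (rename ![0, 1] f) = aeval ((fun i => if (![1, 1, 0, 0] : Fin 4 → ℕ) i = 0
        then (X i : MvPolynomial (Fin 4) A) else 0) ∘ ![0, 1]) f from aeval_rename _ _ _]
      have hv : ((fun i => if (![1, 1, 0, 0] : Fin 4 → ℕ) i = 0 then (X i : MvPolynomial (Fin 4) A) else 0)
          ∘ ![0, 1]) = (fun _ => (0 : MvPolynomial (Fin 4) A)) := by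
        funext j
        fin_cases j <;> simp
      rw [hv]
      rw [show (fun _ => (0 : MvPolynomial (Fin 4) A)) = (0 : Fin 2 → MvPolynomial (Fin 4) A) from rfl, aeval_zero]
      have : constantCoeff f = 0 := by
        rw [constantCoeff_eq]
        exact hf.coeff_eq_zero (d := 0) (by simp [Finsupp.weight_apply]; omega)
      rw [this, map_zero]
    have hid1 : F1Y = X 2 * Z h11 + X 3 * Z h12 := by
      have := congrArg Z hh1
      rw [map_sub, map_add, map_mul, map_mul, map_sub, map_sub, hZ0, hZ1, hZ2, hZ3,
        hF1X, hF1Y, hZY, hZX f1 d1 hf1 hd1] at this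
      rw [hF1Y]
      linear_combination -this
    have hid2 : F2Y = X 2 * Z h21 + X 3 * Z h22 := by
      have := congrArg Z hh2
      rw [map_sub, map_add, map_mul, map_mul, map_sub, map_sub, hZ0, hZ1, hZ2, hZ3,
        hF2X, hF2Y, hZY, hZX f2 d2 hf2 hd2] at this
      rw [hF2Y]
      linear_combination -this
    have hidA1 : F1Y = X 2 * rename ![2, 3] a11 + X 3 * rename ![2, 3] a12 := by
      rw [hF1Y, hfa1, map_add, map_mul, map_mul, rename_X, rename_X]
      norm_num
    have hidA2 : F2Y = X 2 * rename ![2, 3] a21 + X 3 * rename ![2, 3] a22 := by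
      rw [hF2Y, hfa2, map_add, map_mul, map_mul, rename_X, rename_X]
      norm_num
    obtain ⟨u1, u2, hu⟩ := detCongr (fun p q hpq => Xdvd (by decide : (2 : Fin 4) ≠ 3) hpq)
      hid1 hidA1 hid2 hidA2
    have hrenA : rename ![2, 3] (a11 * a22 - a12 * a21)
        = rename ![2, 3] a11 * rename ![2, 3] a22 - rename ![2, 3] a12 * rename ![2, 3] a21 := by
      rw [map_sub, map_mul, map_mul]
    have hZdet : weightedHomogeneousComponent ![1, 1, 0, 0] 0 (h11 * h22 - h12 * h21)
        = Z h11 * Z h22 - Z h12 * Z h21 := by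
      rw [comp0_eq_aeval, ← hZd, map_sub, map_mul, map_mul]
    have hfinal : weightedHomogeneousComponent ![1, 1, 0, 0] 0 (h11 * h22 - h12 * h21)
          - rename ![2, 3] (a11 * a22 - a12 * a21)
        = u1 * F1Y + u2 * F2Y := by
      rw [hZdet, map_sub, map_mul, map_mul]
      linear_combination hu
    rw [hfinal]
    exact I.add_mem (I.mul_mem_left u1 hmemF1Y) (I.mul_mem_left u2 hmemF2Y)
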